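/- Let ξ₁,...,ξₙ be independent centered random variables satisfying condition (A): there exist δ ∈ (0,1] and B > 0 such that E[|ξᵢ|^{2+δ}] ≤ B^{2+δ} for all i and ∑ᵢ E[ξᵢ² e^{λξᵢ}] ≥ (1 − Bλ)∑ᵢ E[ξᵢ²] for all λ ≥ 0. Assume also ξᵢ ≤ B a.s. Then for all λ ≥ 0, B_n(λ) = ∑ᵢ E[ξᵢ e^{λξᵢ}]/E[e^{λξᵢ}] ≥ (1 − Bλ/2) λ σ² e^{−B²λ²/2}, where σ² = ∑ᵢ E[ξᵢ²]. -/

import Mathlib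

open MeasureTheory ProbabilityTheory Real Filter

noncomputable def gB (s : ℝ) : ℝ := ∫ t in (0:ℝ)..1, (1 - t) * Real.exp (t * s)

lemma gB_sq_mul (z : ℝ) : z ^ 2 * gB z = Real.exp z - 1 - z := by
  have hderiv : ∀ t ∈ Set.uIcc (0:ℝ) 1,
      HasDerivAt (fun t => Real.exp (t * z) * (z * (1 - t) + 1))
        (z ^ 2 * ((1 - t) * Real.exp (t * z))) t := by
    intro t _
    have h1 : HasDerivAt (fun t : ℝ => Real.exp (t * z)) (Real.exp (t * z) * z) t :=
      by simpa using ((hasDerivAt_id t).mul_const z).exp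
    have h2 : HasDerivAt (fun t : ℝ => z * (1 - t) + 1) (-z) t := by
      simpa using (((hasDerivAt_const t (1:ℝ)).sub (hasDerivAt_id t)).const_mul z).add_const 1
    have := h1.mul h2
    refine this.congr_deriv ?_
    ring
  have hInt : IntervalIntegrable (fun t => z ^ 2 * ((1 - t) * Real.exp (t * z)))
      MeasureTheory.volume 0 1 := by
    apply Continuous.intervalIntegrable
    continuity
  have := intervalIntegral.integral_eq_sub_of_hasDerivAt hderiv hInt
  rw [intervalIntegral.integral_const_mul] at this
  unfold gB
  rw [this]
  simp
  ring

lemma gB_nonneg (s : ℝ) : 0 ≤ gB s := by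
  apply intervalIntegral.integral_nonneg (by norm_num)
  intro t ht
  exact mul_nonneg (by linarith [ht.2]) (Real.exp_pos _).le

lemma gB_mono {z s : ℝ} (h : z ≤ s) : gB z ≤ gB s := by
  apply intervalIntegral.integral_mono_on (by norm_num)
  · exact (Continuous.intervalIntegrable (by continuity) _ _)
  · exact (Continuous.intervalIntegrable (by continuity) _ _)
  · intro t ht
    have : t * z ≤ t * s := mul_le_mul_of_nonneg_left h ht.1
    exact mul_le_mul_of_nonneg_left (Real.exp_le_exp.2 this) (by linarith [ht.2])

lemma bennett {z s : ℝ} (h : z ≤ s) : Real.exp z ≤ 1 + z + z ^ 2 * gB s := by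
  have := gB_sq_mul z
  nlinarith [mul_le_mul_of_nonneg_left (gB_mono h) (sq_nonneg z)]

lemma cosh_combo (u : ℝ) :
    Real.exp (-u) * (1 + u + 2 * u ^ 2 * gB (2 * u)) = Real.cosh u := by
  have h := gB_sq_mul (2 * u)
  have : 2 * u ^ 2 * gB (2 * u) = (Real.exp (2 * u) - 1 - 2 * u) / 2 := by nlinarith
  rw [this, Real.cosh_eq]
  rw [show 2 * u = u + u by ring, Real.exp_add]
  have h1 := Real.exp_ne_zero u
  field_simp [Real.exp_neg]
  rw [Real.exp_neg]; field_simp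
  ring

lemma den_le_cosh {Ω : Type*} [MeasurableSpace Ω] (μ : Measure Ω) [IsProbabilityMeasure μ]
    (f : Ω → ℝ) (B l : ℝ) (hB : 0 < B) (hl : 0 ≤ l)
    (hbdd : ∀ᵐ ω ∂μ, f ω ≤ B)
    (hint : Integrable f μ) (hmean : ∫ ω, f ω ∂μ = 0)
    (hint2 : Integrable (fun ω => f ω ^ 2) μ)
    (hvar : ∫ ω, f ω ^ 2 ∂μ ≤ B ^ 2)
    (hinte : Integrable (fun ω => Real.exp (l * f ω)) μ) :
    ∫ ω, Real.exp (l * f ω) ∂μ ≤ Real.cosh (l * B) := by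
  set u := l * B with hu
  have hu0 : 0 ≤ u := mul_nonneg hl hB.le
  set g := gB (2 * u) with hg
  have hg0 : 0 ≤ g := gB_nonneg _
  set c0 := Real.exp (-u) * (1 + u + u ^ 2 * g) with hc0
  set c1 := Real.exp (-u) * (l + 2 * l * u * g) with hc1
  set c2 := Real.exp (-u) * (l ^ 2 * g) with hc2
  have hR : Integrable (fun ω => c0 + c1 * f ω + c2 * f ω ^ 2) μ :=
    ((integrable_const _).add (hint.const_mul _)).add (hint2.const_mul _)
  have hpt : ∀ᵐ ω ∂μ, Real.exp (l * f ω) ≤ c0 + c1 * f ω + c2 * f ω ^ 2 := by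
    filter_upwards [hbdd] with ω hω
    have hz : l * f ω + u ≤ 2 * u := by nlinarith
    have hb := bennett hz
    have he : Real.exp (l * f ω) = Real.exp (-u) * Real.exp (l * f ω + u) := by
      rw [← Real.exp_add]; ring_nf
    rw [he]
    have := mul_le_mul_of_nonneg_left hb (Real.exp_pos (-u)).le
    refine le_trans this (le_of_eq ?_)
    rw [hc0, hc1, hc2]; ring
  have hle := integral_mono_ae hinte hR hpt
  have hcalc : ∫ ω, (c0 + c1 * f ω + c2 * f ω ^ 2) ∂μ = c0 + c2 * ∫ ω, f ω ^ 2 ∂μ := by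
    calc ∫ ω, (c0 + c1 * f ω + c2 * f ω ^ 2) ∂μ
        = (∫ ω, (c0 + c1 * f ω) ∂μ) + ∫ ω, c2 * f ω ^ 2 ∂μ :=
          integral_add ((integrable_const _).add (hint.const_mul _)) (hint2.const_mul _)
      _ = ((∫ _ω, c0 ∂μ) + ∫ ω, c1 * f ω ∂μ) + ∫ ω, c2 * f ω ^ 2 ∂μ := by
          rw [integral_add (integrable_const _) (hint.const_mul _)]
      _ = c0 + c2 * ∫ ω, f ω ^ 2 ∂μ := by
          simp only [integral_const_mul, integral_const, probReal_univ, ENNReal.toReal_one,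
            smul_eq_mul, one_mul, hmean, mul_zero, add_zero]
  rw [hcalc] at hle
  have hc2B : c2 * ∫ ω, f ω ^ 2 ∂μ ≤ c2 * B ^ 2 :=
    mul_le_mul_of_nonneg_left hvar (by positivity)
  have : c0 + c2 * B ^ 2 = Real.cosh u := by
    rw [← cosh_combo u, hc0, hc2]
    ring
  linarith

lemma sq_int_le_of_mom {Ω : Type*} [MeasurableSpace Ω] (μ : Measure Ω) [IsProbabilityMeasure μ]
    (f : Ω → ℝ) (B δ : ℝ) (hB : 0 < B) (hδ0 : 0 < δ) (hδ1 : δ ≤ 1)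
    (hint2 : Integrable (fun ω => f ω ^ 2) μ)
    (hintp : Integrable (fun ω => |f ω| ^ (2 + δ)) μ)
    (hmom : ∫ ω, |f ω| ^ (2 + δ) ∂μ ≤ B ^ (2 + δ)) :
    ∫ ω, f ω ^ 2 ∂μ ≤ B ^ 2 := by
  have h2δ : (0:ℝ) < 2 + δ := by linarith
  set w₁ : ℝ := 2 / (2 + δ) with hw₁
  set w₂ : ℝ := δ / (2 + δ) with hw₂
  have hw₁0 : 0 ≤ w₁ := by positivity
  have hw₂0 : 0 ≤ w₂ := by positivity
  have hwsum : w₁ + w₂ = 1 := by rw [hw₁, hw₂]; field_simp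
  have hpt : ∀ ω, f ω ^ 2 ≤ w₁ * (|f ω| ^ (2 + δ) * B ^ (-δ)) + w₂ * B ^ 2 := by
    intro ω
    set x := f ω
    have hp₁ : (0:ℝ) ≤ |x| ^ (2 + δ) * B ^ (-δ) := by positivity
    have hp₂ : (0:ℝ) ≤ B ^ 2 := by positivity
    have hgm := Real.geom_mean_le_arith_mean2_weighted hw₁0 hw₂0 hp₁ hp₂ hwsum
    have hkey : (|x| ^ (2 + δ) * B ^ (-δ)) ^ w₁ * (B ^ 2) ^ w₂ = x ^ 2 := by
      have e1 : (|x| ^ (2 + δ) * B ^ (-δ)) ^ w₁ = |x| ^ ((2 + δ) * w₁) * B ^ (-δ * w₁) := by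
        rw [Real.mul_rpow (by positivity) (by positivity), ← Real.rpow_mul (abs_nonneg x),
          ← Real.rpow_mul hB.le]
      have e2 : ((B:ℝ) ^ (2:ℕ)) ^ w₂ = B ^ ((2:ℝ) * w₂) := by
        rw [← Real.rpow_natCast B 2, ← Real.rpow_mul hB.le]
        norm_num
      have e3 : (2 + δ) * w₁ = 2 := by rw [hw₁]; field_simp
      have e4 : -δ * w₁ + (2:ℝ) * w₂ = 0 := by rw [hw₁, hw₂]; field_simp; ring
      calc (|x| ^ (2 + δ) * B ^ (-δ)) ^ w₁ * (B ^ 2) ^ w₂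
          = |x| ^ ((2 + δ) * w₁) * (B ^ (-δ * w₁) * B ^ ((2:ℝ) * w₂)) := by
            rw [e1, e2]; ring
        _ = |x| ^ ((2:ℝ)) * B ^ ((0:ℝ)) := by rw [← Real.rpow_add hB, e3, e4]
        _ = x ^ 2 := by rw [Real.rpow_zero, mul_one, Real.rpow_two, sq_abs]
    rw [← hkey]
    exact hgm
  have hRint : Integrable (fun ω => w₁ * (|f ω| ^ (2 + δ) * B ^ (-δ)) + w₂ * B ^ 2) μ :=
    ((hintp.mul_const _).const_mul _).add (integrable_const _)
  have hle := integral_mono hint2 hRint (fun ω => hpt ω)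
  have hsplit : ∫ ω, (w₁ * (|f ω| ^ (2 + δ) * B ^ (-δ)) + w₂ * B ^ 2) ∂μ
      = w₁ * ((∫ ω, |f ω| ^ (2 + δ) ∂μ) * B ^ (-δ)) + w₂ * B ^ 2 := by
    calc ∫ ω, (w₁ * (|f ω| ^ (2 + δ) * B ^ (-δ)) + w₂ * B ^ 2) ∂μ
        = (∫ ω, w₁ * (|f ω| ^ (2 + δ) * B ^ (-δ)) ∂μ) + ∫ _ω, w₂ * B ^ 2 ∂μ :=
          integral_add ((hintp.mul_const _).const_mul _) (integrable_const _)
      _ = w₁ * ((∫ ω, |f ω| ^ (2 + δ) ∂μ) * B ^ (-δ)) + w₂ * B ^ 2 := by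
          simp only [integral_const_mul, integral_mul_const, integral_const, probReal_univ,
            ENNReal.toReal_one, smul_eq_mul, one_mul]
  rw [hsplit] at hle
  have hmm : (∫ ω, |f ω| ^ (2 + δ) ∂μ) * B ^ (-δ) ≤ B ^ 2 := by
    have hBneg : (0:ℝ) ≤ B ^ (-δ:ℝ) := by positivity
    have := mul_le_mul_of_nonneg_right hmom hBneg
    refine le_trans this (le_of_eq ?_)
    rw [← Real.rpow_add hB, ← Real.rpow_natCast B 2]
    norm_num
  nlinarith [mul_le_mul_of_nonneg_left hmm hw₁0]

lemma num_key {Ω : Type*} [MeasurableSpace Ω] (μ : Measure Ω) [IsProbabilityMeasure μ]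
    (f : Ω → ℝ) (hmeasf : Measurable f) (l : ℝ) (hl : 0 ≤ l)
    (hint : Integrable f μ)
    (hint2 : Integrable (fun ω => f ω ^ 2) μ)
    (hintxe : Integrable (fun ω => f ω * Real.exp (l * f ω)) μ)
    (hintx2e : ∀ t : ℝ, 0 ≤ t → Integrable (fun ω => f ω ^ 2 * Real.exp (t * f ω)) μ) :
    (∫ t in Set.Ioc 0 l, (∫ ω, f ω ^ 2 * Real.exp (t * f ω) ∂μ))
        = (∫ ω, f ω * Real.exp (l * f ω) ∂μ) - (∫ ω, f ω ∂μ)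
      ∧ IntegrableOn (fun t => ∫ ω, f ω ^ 2 * Real.exp (t * f ω) ∂μ) (Set.Ioc 0 l) := by
  set ρ := volume.restrict (Set.Ioc (0:ℝ) l) with hρ
  haveI hfin : IsFiniteMeasure ρ := by
    constructor
    rw [hρ, Measure.restrict_apply_univ, Real.volume_Ioc]
    exact ENNReal.ofReal_lt_top
  have hFmeas : Measurable (Function.uncurry fun (t : ℝ) (ω : Ω) =>
      f ω ^ 2 * Real.exp (t * f ω)) :=
    ((hmeasf.comp measurable_snd).pow_const 2).mul
      ((measurable_fst.mul (hmeasf.comp measurable_snd)).exp)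
  have hdom : ∀ t ∈ Set.Ioc (0:ℝ) l, ∀ ω,
      f ω ^ 2 * Real.exp (t * f ω) ≤ f ω ^ 2 + f ω ^ 2 * Real.exp (l * f ω) := by
    intro t ht ω
    rcases le_or_gt 0 (f ω) with h | h
    · have he : Real.exp (t * f ω) ≤ Real.exp (l * f ω) :=
        Real.exp_le_exp.2 (mul_le_mul_of_nonneg_right ht.2 h)
      nlinarith [sq_nonneg (f ω), Real.exp_pos (t * f ω)]
    · have he : Real.exp (t * f ω) ≤ 1 := by
        rw [Real.exp_le_one_iff]
        exact mul_nonpos_of_nonneg_of_nonpos ht.1.le h.le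
      nlinarith [sq_nonneg (f ω), Real.exp_pos (l * f ω)]
  have hGint : Integrable (fun ω => f ω ^ 2 + f ω ^ 2 * Real.exp (l * f ω)) μ :=
    hint2.add (hintx2e l hl)
  have hFint : Integrable
      (Function.uncurry fun (t : ℝ) (ω : Ω) => f ω ^ 2 * Real.exp (t * f ω)) (ρ.prod μ) := by
    rw [integrable_prod_iff hFmeas.aestronglyMeasurable]
    constructor
    · filter_upwards [ae_restrict_mem measurableSet_Ioc] with t ht
      exact hintx2e t ht.1.le
    · apply Integrable.mono'
        (integrable_const (∫ ω, (f ω ^ 2 + f ω ^ 2 * Real.exp (l * f ω)) ∂μ))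
      · exact hFmeas.norm.aestronglyMeasurable.integral_prod_right'
      · filter_upwards [ae_restrict_mem measurableSet_Ioc] with t ht
        have hnn : ∀ ω, (0:ℝ) ≤ f ω ^ 2 * Real.exp (t * f ω) := fun ω => by positivity
        have heq : (fun ω => ‖Function.uncurry (fun (t : ℝ) (ω : Ω) =>
            f ω ^ 2 * Real.exp (t * f ω)) (t, ω)‖) = fun ω => f ω ^ 2 * Real.exp (t * f ω) := by
          funext ω
          exact norm_of_nonneg (hnn ω)
        rw [heq, norm_of_nonneg (integral_nonneg hnn)]
        exact integral_mono (hintx2e t ht.1.le) hGint (hdom t ht)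
  have hswap := integral_integral_swap hFint
  have hinner : ∀ ω, (∫ t in Set.Ioc (0:ℝ) l, f ω ^ 2 * Real.exp (t * f ω))
      = f ω * Real.exp (l * f ω) - f ω := by
    intro ω
    set x := f ω with hx
    rw [← intervalIntegral.integral_of_le hl]
    have hderiv : ∀ t ∈ Set.uIcc (0:ℝ) l,
        HasDerivAt (fun t => x * Real.exp (t * x)) (x ^ 2 * Real.exp (t * x)) t := by
      intro t _
      have h1 : HasDerivAt (fun t : ℝ => Real.exp (t * x)) (Real.exp (t * x) * x) t := by
        simpa using ((hasDerivAt_id t).mul_const x).exp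
      have h2 := h1.const_mul x
      refine h2.congr_deriv ?_
      ring
    have hci : IntervalIntegrable (fun t => x ^ 2 * Real.exp (t * x)) volume 0 l :=
      (Continuous.intervalIntegrable (by continuity) _ _)
    rw [intervalIntegral.integral_eq_sub_of_hasDerivAt hderiv hci]
    norm_num
  constructor
  · calc (∫ t in Set.Ioc 0 l, (∫ ω, f ω ^ 2 * Real.exp (t * f ω) ∂μ))
        = ∫ ω, (∫ t in Set.Ioc (0:ℝ) l, f ω ^ 2 * Real.exp (t * f ω)) ∂μ := hswap
      _ = ∫ ω, (f ω * Real.exp (l * f ω) - f ω) ∂μ := by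
          congr 1
          funext ω
          exact hinner ω
      _ = (∫ ω, f ω * Real.exp (l * f ω) ∂μ) - ∫ ω, f ω ∂μ := integral_sub hintxe hint
  · exact hFint.integral_prod_left

lemma mom_integrable {Ω : Type*} [MeasurableSpace Ω] (μ : Measure Ω)
    [IsProbabilityMeasure μ] (n : ℕ) (ξ : Fin n → Ω → ℝ) (B δ : ℝ) (hB : 0 < B)
    (hδ0 : 0 < δ) (hδ1 : δ ≤ 1)
    (hmeas : ∀ i, Measurable (ξ i))
    (hbdd : ∀ i, ∀ᵐ ω ∂μ, ξ i ω ≤ B)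
    (hint2 : ∀ i, Integrable (fun ω => (ξ i ω) ^ 2) μ)
    (hintx2e : ∀ i, ∀ l : ℝ, 0 ≤ l →
      Integrable (fun ω => (ξ i ω) ^ 2 * Real.exp (l * ξ i ω)) μ)
    (hA : ∀ l : ℝ, 0 ≤ l →
      (1 - B * l) * ∑ i, ∫ ω, (ξ i ω) ^ 2 ∂μ
        ≤ ∑ i, ∫ ω, (ξ i ω) ^ 2 * Real.exp (l * ξ i ω) ∂μ) (i : Fin n) :
    Integrable (fun ω => |ξ i ω| ^ (2 + δ)) μ := by
  set S := ∑ j, ∫ ω, (ξ j ω) ^ 2 ∂μ with hSdef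
  have hSj : ∀ j, 0 ≤ ∫ ω, (ξ j ω) ^ 2 ∂μ := fun j => integral_nonneg fun ω => sq_nonneg _
  have hS0 : 0 ≤ S := Finset.sum_nonneg fun j _ => hSj j
  -- Step 1 : uniform bound on truncated integrals
  have claim1 : ∀ l : ℝ, 0 < l →
      ∫ ω, max ((ξ i ω) ^ 2 * (1 - Real.exp (l * ξ i ω))) 0 ∂μ
        ≤ B * l * S + 2 * (Real.exp (l * B) - 1) * S := by
    intro l hl
    have hexp1 : (1:ℝ) ≤ Real.exp (l * B) := by
      rw [show (1:ℝ) = Real.exp 0 by simp]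
      exact Real.exp_le_exp.2 (by positivity)
    have hTj : ∀ j, ∫ ω, (ξ j ω) ^ 2 * Real.exp (l * ξ j ω) ∂μ
        ≤ Real.exp (l * B) * ∫ ω, (ξ j ω) ^ 2 ∂μ := by
      intro j
      have he : Real.exp (l * B) * ∫ ω, (ξ j ω) ^ 2 ∂μ
          = ∫ ω, Real.exp (l * B) * (ξ j ω) ^ 2 ∂μ := (integral_const_mul _ _).symm
      rw [he]
      refine integral_mono_ae (hintx2e j l hl.le) ((hint2 j).const_mul _) ?_
      filter_upwards [hbdd j] with ω hω
      have : Real.exp (l * ξ j ω) ≤ Real.exp (l * B) :=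
        Real.exp_le_exp.2 (mul_le_mul_of_nonneg_left hω hl.le)
      nlinarith [sq_nonneg (ξ j ω)]
    have hsumD : ∑ j, ((∫ ω, (ξ j ω) ^ 2 ∂μ) - ∫ ω, (ξ j ω) ^ 2 * Real.exp (l * ξ j ω) ∂μ)
        ≤ B * l * S := by
      rw [Finset.sum_sub_distrib]
      have h1 := hA l hl.le
      linarith
    have hDi : (∫ ω, (ξ i ω) ^ 2 ∂μ) - (∫ ω, (ξ i ω) ^ 2 * Real.exp (l * ξ i ω) ∂μ)
        ≤ B * l * S + (Real.exp (l * B) - 1) * S := by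
      have hsplit := Finset.sum_erase_add Finset.univ
        (fun j => (∫ ω, (ξ j ω) ^ 2 ∂μ) - ∫ ω, (ξ j ω) ^ 2 * Real.exp (l * ξ j ω) ∂μ)
        (Finset.mem_univ i)
      beta_reduce at hsplit
      have herase : ∑ j ∈ Finset.univ.erase i, ∫ ω, (ξ j ω) ^ 2 ∂μ ≤ S :=
        Finset.sum_le_sum_of_subset_of_nonneg (Finset.erase_subset _ _) fun j _ _ => hSj j
      have hlow : (1 - Real.exp (l * B)) * S
          ≤ ∑ j ∈ Finset.univ.erase i,
              ((∫ ω, (ξ j ω) ^ 2 ∂μ) - ∫ ω, (ξ j ω) ^ 2 * Real.exp (l * ξ j ω) ∂μ) := by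
        have h2 : ∑ j ∈ Finset.univ.erase i,
            (1 - Real.exp (l * B)) * ∫ ω, (ξ j ω) ^ 2 ∂μ
            ≤ ∑ j ∈ Finset.univ.erase i,
              ((∫ ω, (ξ j ω) ^ 2 ∂μ) - ∫ ω, (ξ j ω) ^ 2 * Real.exp (l * ξ j ω) ∂μ) :=
          Finset.sum_le_sum fun j _ => by nlinarith [hTj j]
        calc (1 - Real.exp (l * B)) * S
            ≤ (1 - Real.exp (l * B)) * ∑ j ∈ Finset.univ.erase i, ∫ ω, (ξ j ω) ^ 2 ∂μ :=
              mul_le_mul_of_nonpos_left herase (by linarith)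
          _ = ∑ j ∈ Finset.univ.erase i, (1 - Real.exp (l * B)) * ∫ ω, (ξ j ω) ^ 2 ∂μ :=
              Finset.mul_sum _ _ _
          _ ≤ _ := h2
      linarith
    have hptw : ∀ᵐ ω ∂μ, max ((ξ i ω) ^ 2 * (1 - Real.exp (l * ξ i ω))) 0
        ≤ ((ξ i ω) ^ 2 - (ξ i ω) ^ 2 * Real.exp (l * ξ i ω))
          + (Real.exp (l * B) - 1) * (ξ i ω) ^ 2 := by
      filter_upwards [hbdd i] with ω hω
      have hee : Real.exp (l * ξ i ω) ≤ Real.exp (l * B) :=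
        Real.exp_le_exp.2 (mul_le_mul_of_nonneg_left hω hl.le)
      rcases max_cases ((ξ i ω) ^ 2 * (1 - Real.exp (l * ξ i ω))) 0 with ⟨h1, _⟩ | ⟨h1, _⟩ <;>
        rw [h1] <;> nlinarith [sq_nonneg (ξ i ω)]
    have hsubint : Integrable (fun ω => (ξ i ω) ^ 2 * (1 - Real.exp (l * ξ i ω))) μ := by
      have heq : (fun ω => (ξ i ω) ^ 2 * (1 - Real.exp (l * ξ i ω)))
          = fun ω => (ξ i ω) ^ 2 - (ξ i ω) ^ 2 * Real.exp (l * ξ i ω) := by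
        funext ω; ring
      rw [heq]
      exact (hint2 i).sub (hintx2e i l hl.le)
    have hmaxint : Integrable
        (fun ω => max ((ξ i ω) ^ 2 * (1 - Real.exp (l * ξ i ω))) 0) μ := hsubint.pos_part
    have hRint : Integrable (fun ω => ((ξ i ω) ^ 2 - (ξ i ω) ^ 2 * Real.exp (l * ξ i ω))
        + (Real.exp (l * B) - 1) * (ξ i ω) ^ 2) μ :=
      ((hint2 i).sub (hintx2e i l hl.le)).add ((hint2 i).const_mul _)
    have hmono := integral_mono_ae hmaxint hRint hptw
    have hRval : ∫ ω, (((ξ i ω) ^ 2 - (ξ i ω) ^ 2 * Real.exp (l * ξ i ω))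
        + (Real.exp (l * B) - 1) * (ξ i ω) ^ 2) ∂μ
        = ((∫ ω, (ξ i ω) ^ 2 ∂μ) - ∫ ω, (ξ i ω) ^ 2 * Real.exp (l * ξ i ω) ∂μ)
          + (Real.exp (l * B) - 1) * ∫ ω, (ξ i ω) ^ 2 ∂μ := by
      have e1 : ∫ ω, (((ξ i ω) ^ 2 - (ξ i ω) ^ 2 * Real.exp (l * ξ i ω))
          + (Real.exp (l * B) - 1) * (ξ i ω) ^ 2) ∂μ
          = (∫ ω, ((ξ i ω) ^ 2 - (ξ i ω) ^ 2 * Real.exp (l * ξ i ω)) ∂μ)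
            + ∫ ω, (Real.exp (l * B) - 1) * (ξ i ω) ^ 2 ∂μ := by
        exact integral_add ((hint2 i).sub (hintx2e i l hl.le)) ((hint2 i).const_mul _)
      have e2 : ∫ ω, ((ξ i ω) ^ 2 - (ξ i ω) ^ 2 * Real.exp (l * ξ i ω)) ∂μ
          = (∫ ω, (ξ i ω) ^ 2 ∂μ) - ∫ ω, (ξ i ω) ^ 2 * Real.exp (l * ξ i ω) ∂μ := by
        exact integral_sub (hint2 i) (hintx2e i l hl.le)
      rw [e1, e2, integral_const_mul]
    rw [hRval] at hmono
    have hSiS : ∫ ω, (ξ i ω) ^ 2 ∂μ ≤ S :=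
      Finset.single_le_sum (fun j _ => hSj j) (Finset.mem_univ i)
    have hfin : (Real.exp (l * B) - 1) * ∫ ω, (ξ i ω) ^ 2 ∂μ ≤ (Real.exp (l * B) - 1) * S :=
      mul_le_mul_of_nonneg_left hSiS (by linarith)
    linarith
  -- Step 2 : Fatou gives integrability of the negative cube
  have hcube : Integrable (fun ω => max (-(ξ i ω) ^ 3) 0) μ := by
    set C := B * S + 2 * (B * Real.exp B) * S with hC
    have hmaxint : ∀ k : ℕ, Integrable
        (fun ω => max ((ξ i ω) ^ 2 * (1 - Real.exp ((1 / ((k:ℝ) + 1)) * ξ i ω))) 0) μ := by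
      intro k
      have hl : (0:ℝ) ≤ 1 / ((k:ℝ) + 1) := by positivity
      have heq : (fun ω => (ξ i ω) ^ 2 * (1 - Real.exp ((1 / ((k:ℝ) + 1)) * ξ i ω)))
          = fun ω => (ξ i ω) ^ 2 - (ξ i ω) ^ 2 * Real.exp ((1 / ((k:ℝ) + 1)) * ξ i ω) := by
        funext ω; ring
      exact (heq ▸ ((hint2 i).sub (hintx2e i _ hl)) : Integrable _ μ).pos_part
    have hgk : ∀ k : ℕ,
        ∫ ω, ((k:ℝ) + 1) *
          max ((ξ i ω) ^ 2 * (1 - Real.exp ((1 / ((k:ℝ) + 1)) * ξ i ω))) 0 ∂μ ≤ C := by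
      intro k
      have hk1 : (0:ℝ) < (k:ℝ) + 1 := by positivity
      have hl : (0:ℝ) < 1 / ((k:ℝ) + 1) := by positivity
      have h1 := claim1 _ hl
      rw [integral_const_mul]
      set t := 1 / ((k:ℝ) + 1) * B with ht
      have ht0 : 0 < t := by positivity
      have htB : t ≤ B := by
        rw [ht, div_mul_eq_mul_div, one_mul, div_le_iff₀ hk1]
        nlinarith
      have hkey : Real.exp t - 1 ≤ t * Real.exp B := by
        have h2 := Real.add_one_le_exp (-t)
        have h3 : Real.exp (-t) = (Real.exp t)⁻¹ := Real.exp_neg t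
        have h4 : Real.exp t ≤ Real.exp B := Real.exp_le_exp.2 htB
        have h5 : Real.exp t * (Real.exp t)⁻¹ = 1 := mul_inv_cancel₀ (Real.exp_ne_zero t)
        nlinarith [Real.exp_pos t]
      calc ((k:ℝ) + 1) *
            ∫ ω, max ((ξ i ω) ^ 2 * (1 - Real.exp ((1 / ((k:ℝ) + 1)) * ξ i ω))) 0 ∂μ
          ≤ ((k:ℝ) + 1) * (B * (1 / ((k:ℝ) + 1)) * S + 2 * (Real.exp t - 1) * S) :=
            mul_le_mul_of_nonneg_left h1 hk1.le
        _ ≤ C := by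
            rw [hC]
            have e1 : ((k:ℝ) + 1) * (B * (1 / ((k:ℝ) + 1))) = B := by field_simp
            have e2 : ((k:ℝ) + 1) * (Real.exp t - 1) ≤ B * Real.exp B := by
              calc ((k:ℝ) + 1) * (Real.exp t - 1) ≤ ((k:ℝ) + 1) * (t * Real.exp B) :=
                    mul_le_mul_of_nonneg_left hkey hk1.le
                _ = B * Real.exp B := by rw [ht]; field_simp
            nlinarith [mul_le_mul_of_nonneg_right e2 hS0]
    -- pointwise limit
    have hlim : ∀ ω : Ω, Tendsto (fun k : ℕ =>
        ENNReal.ofReal (((k:ℝ) + 1) *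
          max ((ξ i ω) ^ 2 * (1 - Real.exp ((1 / ((k:ℝ) + 1)) * ξ i ω))) 0)) atTop
        (nhds (ENNReal.ofReal (max (-(ξ i ω) ^ 3) 0))) := by
      intro ω
      set x := ξ i ω with hx
      have hder : HasDerivAt (fun t : ℝ => -(x ^ 2) * Real.exp (t * x)) (-(x ^ 3)) 0 := by
        have h1 : HasDerivAt (fun t : ℝ => Real.exp (t * x)) (Real.exp ((0:ℝ) * x) * x) 0 := by
          simpa using ((hasDerivAt_id (0:ℝ)).mul_const x).exp
        have h2 := h1.const_mul (-(x ^ 2))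
        refine h2.congr_deriv ?_
        simp
        ring
      rw [hasDerivAt_iff_tendsto_slope] at hder
      have htend : Tendsto (fun k : ℕ => 1 / ((k:ℝ) + 1)) atTop (nhdsWithin 0 {(0:ℝ)}ᶜ) := by
        apply tendsto_nhdsWithin_of_tendsto_nhds_of_eventually_within
        · exact tendsto_one_div_add_atTop_nhds_zero_nat
        · filter_upwards with k
          simp only [Set.mem_compl_iff, Set.mem_singleton_iff]
          positivity
      have hcomp := hder.comp htend
      have heqfun : (fun k : ℕ => ((k:ℝ) + 1) *
          (x ^ 2 * (1 - Real.exp ((1 / ((k:ℝ) + 1)) * x))))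
          = (slope (fun t : ℝ => -(x ^ 2) * Real.exp (t * x)) 0) ∘
            (fun k : ℕ => 1 / ((k:ℝ) + 1)) := by
        funext k
        have hk1 : ((k:ℝ) + 1) ≠ 0 := by positivity
        simp only [Function.comp_apply, slope_def_field]
        rw [sub_zero, zero_mul, Real.exp_zero]
        field_simp
        ring
      have h5 : Tendsto (fun k : ℕ => ((k:ℝ) + 1) *
          (x ^ 2 * (1 - Real.exp ((1 / ((k:ℝ) + 1)) * x)))) atTop (nhds (-(x ^ 3))) := by
        rw [heqfun]
        exact hcomp
      have h6 := h5.max (tendsto_const_nhds (x := (0:ℝ)))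
      have h7 : ∀ k : ℕ, ((k:ℝ) + 1) *
          max (x ^ 2 * (1 - Real.exp ((1 / ((k:ℝ) + 1)) * x))) 0
          = max (((k:ℝ) + 1) *
            (x ^ 2 * (1 - Real.exp ((1 / ((k:ℝ) + 1)) * x)))) 0 := fun k => by
        rw [mul_max_of_nonneg _ _ (by positivity : (0:ℝ) ≤ (k:ℝ) + 1), mul_zero]
      simp only [h7]
      exact (ENNReal.continuous_ofReal.tendsto _).comp h6
    have hmeasg : ∀ k : ℕ, Measurable (fun ω => ENNReal.ofReal (((k:ℝ) + 1) *
        max ((ξ i ω) ^ 2 * (1 - Real.exp ((1 / ((k:ℝ) + 1)) * ξ i ω))) 0)) := by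
      intro k
      apply ENNReal.measurable_ofReal.comp
      exact (measurable_const.mul ((((hmeas i).pow_const 2).mul
        (measurable_const.sub ((measurable_const.mul (hmeas i)).exp))).max measurable_const))
    have hfatou : ∫⁻ ω, ENNReal.ofReal (max (-(ξ i ω) ^ 3) 0) ∂μ ≤ ENNReal.ofReal C := by
      calc ∫⁻ ω, ENNReal.ofReal (max (-(ξ i ω) ^ 3) 0) ∂μ
          = ∫⁻ ω, liminf (fun k : ℕ => ENNReal.ofReal (((k:ℝ) + 1) *
              max ((ξ i ω) ^ 2 * (1 - Real.exp ((1 / ((k:ℝ) + 1)) * ξ i ω))) 0)) atTop ∂μ :=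
            lintegral_congr fun ω => ((hlim ω).liminf_eq).symm
        _ ≤ liminf (fun k : ℕ => ∫⁻ ω, ENNReal.ofReal (((k:ℝ) + 1) *
              max ((ξ i ω) ^ 2 * (1 - Real.exp ((1 / ((k:ℝ) + 1)) * ξ i ω))) 0) ∂μ) atTop :=
            lintegral_liminf_le hmeasg
        _ ≤ ENNReal.ofReal C := by
            have hb : ∀ k : ℕ, ∫⁻ ω, ENNReal.ofReal (((k:ℝ) + 1) *
                max ((ξ i ω) ^ 2 * (1 - Real.exp ((1 / ((k:ℝ) + 1)) * ξ i ω))) 0) ∂μ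
                ≤ ENNReal.ofReal C := by
              intro k
              have hik : Integrable (fun ω => ((k:ℝ) + 1) *
                  max ((ξ i ω) ^ 2 * (1 - Real.exp ((1 / ((k:ℝ) + 1)) * ξ i ω))) 0) μ :=
                (hmaxint k).const_mul _
              have hnn : 0 ≤ᵐ[μ] fun ω => ((k:ℝ) + 1) *
                  max ((ξ i ω) ^ 2 * (1 - Real.exp ((1 / ((k:ℝ) + 1)) * ξ i ω))) 0 := by
                filter_upwards with ω
                positivity
              rw [← ofReal_integral_eq_lintegral_ofReal hik hnn]
              exact ENNReal.ofReal_le_ofReal (hgk k)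
            calc liminf (fun k : ℕ => ∫⁻ ω, ENNReal.ofReal (((k:ℝ) + 1) *
                  max ((ξ i ω) ^ 2 * (1 - Real.exp ((1 / ((k:ℝ) + 1)) * ξ i ω))) 0) ∂μ) atTop
                ≤ liminf (fun _ : ℕ => ENNReal.ofReal C) atTop :=
                  liminf_le_liminf (Eventually.of_forall hb)
              _ = ENNReal.ofReal C := liminf_const _
    refine ⟨((((hmeas i).pow_const 3).neg).max measurable_const).aestronglyMeasurable,
      (hasFiniteIntegral_iff_ofReal ?_).mpr (lt_of_le_of_lt hfatou ENNReal.ofReal_lt_top)⟩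
    filter_upwards with ω
    exact le_max_right _ _
  -- Step 3 : domination
  have hptw : ∀ᵐ ω ∂μ, ‖|ξ i ω| ^ (2 + δ)‖
      ≤ (1 + B) * (ξ i ω) ^ 2 + max (-(ξ i ω) ^ 3) 0 := by
    filter_upwards [hbdd i] with ω hω
    rw [norm_of_nonneg (Real.rpow_nonneg (abs_nonneg _) _)]
    set x := ξ i ω with hx
    clear_value x
    have hmax0 : (0:ℝ) ≤ max (-(x) ^ 3) 0 := le_max_right _ _
    rcases le_or_gt |x| 1 with h1 | h1
    · have h2 : |x| ^ (2 + δ) ≤ |x| ^ (2:ℝ) := by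
        rcases eq_or_lt_of_le (abs_nonneg x) with h0 | h0
        · rw [← h0, Real.zero_rpow (by intro hc; linarith : (2:ℝ) + δ ≠ 0),
            Real.zero_rpow (by norm_num : (2:ℝ) ≠ 0)]
        · exact Real.rpow_le_rpow_of_exponent_ge h0 h1 (by linarith)
      have h3 : |x| ^ (2:ℝ) = x ^ 2 := by rw [Real.rpow_two, sq_abs]
      nlinarith [sq_nonneg x]
    · have h3 : |x| ^ (2 + δ) ≤ |x| ^ (3:ℝ) :=
        Real.rpow_le_rpow_of_exponent_le h1.le (by linarith)
      have h4 : |x| ^ (3:ℝ) = |x| ^ (3:ℕ) := by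
        rw [show ((3:ℝ)) = ((3:ℕ):ℝ) by norm_num, Real.rpow_natCast]
      rcases le_or_gt 0 x with hx0 | hx0
      · have h5 : |x| ^ (3:ℕ) = x ^ 3 := by rw [abs_of_nonneg hx0]
        have h6 : |x| ^ (2 + δ) ≤ x ^ 3 := by rw [h4, h5] at h3; exact h3
        clear h3 h4 h5 h1
        nlinarith [h6, mul_nonneg (sub_nonneg.2 hω) (sq_nonneg x), hmax0, sq_nonneg x]
      · have h5 : |x| ^ (3:ℕ) = -(x ^ 3) := by rw [abs_of_neg hx0]; ring
        have h6 : |x| ^ (2 + δ) ≤ -(x ^ 3) := by rw [h4, h5] at h3; exact h3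
        clear h3 h4 h5 h1
        have h7 : -(x ^ 3) ≤ max (-(x) ^ 3) 0 := by
          rw [show -(x) ^ 3 = -(x ^ 3) by ring]
          exact le_max_left _ _
        nlinarith [h6, h7, mul_nonneg (by linarith : (0:ℝ) ≤ 1 + B) (sq_nonneg x)]
  exact Integrable.mono' (((hint2 i).const_mul (1 + B)).add hcube)
    ((Real.continuous_rpow_const (by linarith)).measurable.comp
      (hmeas i).abs).aestronglyMeasurable hptw


/-- Lower bound on the tilted mean `B_n(λ)` under condition (A). -/
theorem tilted_mean_lower_bound {Ω : Type*} [MeasurableSpace Ω] (μ : Measure Ω)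
    [IsProbabilityMeasure μ] (n : ℕ) (ξ : Fin n → Ω → ℝ) (B δ : ℝ) (hB : 0 < B)
    (hδ : δ ∈ Set.Ioc (0 : ℝ) 1)
    (hmeas : ∀ i, Measurable (ξ i))
    (hindep : iIndepFun ξ μ)
    (hint : ∀ i, Integrable (ξ i) μ) (hmean : ∀ i, ∫ ω, ξ i ω ∂μ = 0)
    (hbdd : ∀ i, ∀ᵐ ω ∂μ, ξ i ω ≤ B)
    (hmom : ∀ i, ∫ ω, |ξ i ω| ^ (2 + δ) ∂μ ≤ B ^ (2 + δ))
    (hint2 : ∀ i, Integrable (fun ω => (ξ i ω) ^ 2) μ)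
    (hinte : ∀ i, ∀ l : ℝ, 0 ≤ l → Integrable (fun ω => Real.exp (l * ξ i ω)) μ)
    (hintxe : ∀ i, ∀ l : ℝ, 0 ≤ l →
      Integrable (fun ω => ξ i ω * Real.exp (l * ξ i ω)) μ)
    (hintx2e : ∀ i, ∀ l : ℝ, 0 ≤ l →
      Integrable (fun ω => (ξ i ω) ^ 2 * Real.exp (l * ξ i ω)) μ)
    (hA : ∀ l : ℝ, 0 ≤ l →
      (1 - B * l) * ∑ i, ∫ ω, (ξ i ω) ^ 2 ∂μ
        ≤ ∑ i, ∫ ω, (ξ i ω) ^ 2 * Real.exp (l * ξ i ω) ∂μ) :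
    ∀ l : ℝ, 0 ≤ l →
      (1 - B * l / 2) * l * (∑ i, ∫ ω, (ξ i ω) ^ 2 ∂μ) * Real.exp (-(B ^ 2 * l ^ 2) / 2)
        ≤ ∑ i, (∫ ω, ξ i ω * Real.exp (l * ξ i ω) ∂μ) / (∫ ω, Real.exp (l * ξ i ω) ∂μ) := by
  intro l hl
  obtain ⟨hδ0, hδ1⟩ := hδ
  set S := ∑ i, ∫ ω, (ξ i ω) ^ 2 ∂μ with hSdef
  have hS0 : 0 ≤ S :=
    Finset.sum_nonneg fun j _ => integral_nonneg fun ω => sq_nonneg _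
  -- variance bound
  have hvar : ∀ i, ∫ ω, (ξ i ω) ^ 2 ∂μ ≤ B ^ 2 := fun i =>
    sq_int_le_of_mom μ (ξ i) B δ hB hδ0 hδ1 (hint2 i)
      (mom_integrable μ n ξ B δ hB hδ0 hδ1 hmeas hbdd hint2 hintx2e hA i) (hmom i)
  -- denominators
  have hden_pos : ∀ i, (1:ℝ) ≤ ∫ ω, Real.exp (l * ξ i ω) ∂μ := by
    intro i
    have h1 : ∀ᵐ ω ∂μ, 1 + l * ξ i ω ≤ Real.exp (l * ξ i ω) := by
      filter_upwards with ω
      have := Real.add_one_le_exp (l * ξ i ω)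
      linarith
    have h2 := integral_mono_ae ((integrable_const 1).add ((hint i).const_mul l))
      (hinte i l hl) h1
    have h3 : ∫ ω, ((1:ℝ) + l * ξ i ω) ∂μ = 1 := by
      have h4 : ∫ ω, ((1:ℝ) + l * ξ i ω) ∂μ
          = (∫ _ω, (1:ℝ) ∂μ) + ∫ ω, l * ξ i ω ∂μ :=
        integral_add (integrable_const _) ((hint i).const_mul _)
      rw [h4, integral_const_mul, hmean i, integral_const]
      simp
    exact le_trans (le_of_eq h3.symm) h2
  have hden_le : ∀ i, ∫ ω, Real.exp (l * ξ i ω) ∂μ ≤ Real.exp (B ^ 2 * l ^ 2 / 2) := by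
    intro i
    calc ∫ ω, Real.exp (l * ξ i ω) ∂μ ≤ Real.cosh (l * B) :=
          den_le_cosh μ (ξ i) B l hB hl (hbdd i) (hint i) (hmean i) (hint2 i) (hvar i)
            (hinte i l hl)
      _ ≤ Real.exp ((l * B) ^ 2 / 2) := Real.cosh_le_exp_half_sq _
      _ = Real.exp (B ^ 2 * l ^ 2 / 2) := by ring_nf
  -- numerators are nonnegative
  have hnum_nonneg : ∀ i, 0 ≤ ∫ ω, ξ i ω * Real.exp (l * ξ i ω) ∂μ := by
    intro i
    have h1 : ∀ᵐ ω ∂μ, ξ i ω ≤ ξ i ω * Real.exp (l * ξ i ω) := by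
      filter_upwards with ω
      rcases le_or_gt 0 (ξ i ω) with h | h
      · have h2 := Real.add_one_le_exp (l * ξ i ω)
        nlinarith [mul_nonneg hl h]
      · have h2 : Real.exp (l * ξ i ω) ≤ 1 := by
          rw [Real.exp_le_one_iff]
          exact mul_nonpos_of_nonneg_of_nonpos hl h.le
        nlinarith
    have h2 := integral_mono_ae (hint i) (hintxe i l hl) h1
    rw [hmean i] at h2
    exact h2
  -- lower bound on sum of numerators (Fubini)
  have hkey := fun i => num_key μ (ξ i) (hmeas i) l hl (hint i) (hint2 i) (hintxe i l hl)
    (fun t ht => hintx2e i t ht)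
  have hkey1 : ∀ i, (∫ t in Set.Ioc 0 l, (∫ ω, (ξ i ω) ^ 2 * Real.exp (t * ξ i ω) ∂μ))
      = ∫ ω, ξ i ω * Real.exp (l * ξ i ω) ∂μ := by
    intro i
    have h := (hkey i).1
    rw [hmean i, sub_zero] at h
    exact h
  have hswap : ∑ i, ∫ ω, ξ i ω * Real.exp (l * ξ i ω) ∂μ
      = ∫ t in Set.Ioc 0 l, (∑ i, ∫ ω, (ξ i ω) ^ 2 * Real.exp (t * ξ i ω) ∂μ) := by
    rw [integral_finset_sum Finset.univ (fun i _ => (hkey i).2)]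
    exact Finset.sum_congr rfl fun i _ => (hkey1 i).symm
  have hIoc : IntegrableOn (fun t => (1 - B * t) * S) (Set.Ioc 0 l) :=
    Continuous.integrableOn_Ioc (by continuity)
  have hmono := integral_mono_ae hIoc
    (integrable_finset_sum Finset.univ fun i _ => (hkey i).2)
    (by
      filter_upwards [ae_restrict_mem measurableSet_Ioc] with t ht
      exact hA t ht.1.le)
  have hval : ∫ t in Set.Ioc 0 l, (1 - B * t) * S = (1 - B * l / 2) * l * S := by
    rw [← intervalIntegral.integral_of_le hl, intervalIntegral.integral_mul_const]
    have h1 : ∫ t in (0:ℝ)..l, (1 - B * t) = l - B * (l ^ 2 / 2) := by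
      have hii : IntervalIntegrable (fun t : ℝ => B * t) MeasureTheory.volume 0 l :=
        Continuous.intervalIntegrable (by continuity) _ _
      rw [intervalIntegral.integral_sub intervalIntegrable_const hii,
        intervalIntegral.integral_const, intervalIntegral.integral_const_mul,
        integral_id]
      simp
    rw [h1]
    ring
  have hsum : (1 - B * l / 2) * l * S ≤ ∑ i, ∫ ω, ξ i ω * Real.exp (l * ξ i ω) ∂μ := by
    rw [hswap, ← hval]
    exact hmono
  -- assembly
  set D := Real.exp (B ^ 2 * l ^ 2 / 2) with hD
  have hD0 : 0 < D := Real.exp_pos _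
  calc (1 - B * l / 2) * l * S * Real.exp (-(B ^ 2 * l ^ 2) / 2)
      = ((1 - B * l / 2) * l * S) / D := by
        rw [hD, show -(B ^ 2 * l ^ 2) / 2 = -(B ^ 2 * l ^ 2 / 2) by ring, Real.exp_neg]
        ring
    _ ≤ (∑ i, ∫ ω, ξ i ω * Real.exp (l * ξ i ω) ∂μ) / D := by
        exact (div_le_div_iff_of_pos_right hD0).2 hsum
    _ = ∑ i, (∫ ω, ξ i ω * Real.exp (l * ξ i ω) ∂μ) / D := Finset.sum_div _ _ _
    _ ≤ ∑ i, (∫ ω, ξ i ω * Real.exp (l * ξ i ω) ∂μ) / (∫ ω, Real.exp (l * ξ i ω) ∂μ) := by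
        apply Finset.sum_le_sum
        intro i _
        have hden0 : 0 < ∫ ω, Real.exp (l * ξ i ω) ∂μ := lt_of_lt_of_le one_pos (hden_pos i)
        exact div_le_div_of_nonneg_left (hnum_nonneg i) hden0 (hden_le i)
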